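/- arXiv:2310.02483 — 3 statements merged into one kernel-verified Lean document; each statement's English description precedes it below -/
import Mathlib

section
/- Let m, r ≥ 1, let a = (a_1, …, a_{2m}) be a sequence of nonzero integers, let ε_1, …, ε_{2r+1} ∈ {1, −1} with ε_1 = 1, and let c_1, …, c_{2r} be nonzero integers. Let ã be the concatenated sequence (ε_1 a, c_1, ε_2 a^{rev}, c_2, ε_3 a, c_3, ε_4 a^{rev}, c_4, …, ε_{2r} a^{rev}, c_{2r}, ε_{2r+1} a), where ε a denotes the sequence (ε a_1, …, ε a_{2m}) and a^{rev} = (a_{2m}, …, a_1); thus blocks alternate between a and its reverse, each block scaled by the sign ε_j, with the single entries c_j inserted between consecutive blocks. Then B(ã) ≥ 3·B(a) − 4. (This is the combinatorial core of the theorem that if there is an epimorphism from the group of a two-bridge knot K onto the group of a knot K′, then braid(K) ≥ 3·braid(K′) − 4: by the Ohtsuki–Riley–Sakuma theorem, the continued fraction of K has exactly the form ã above, built from the continued fraction a of K′.) -/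
/-- The number of sign changes of a finite sequence of integers:
the number of indices `i` with `x_i * x_{i+1} < 0` for consecutive entries. -/
def signChanges (L : List ℤ) : ℕ :=
  ((Finset.range (L.length - 1)).filter (fun i => L.getD i 0 * L.getD (i + 1) 0 < 0)).card

/-- `B(a) = (∑ |a_i|) - t(a) + 1`; if `a` is a reduced even continued fraction
`(2a_1, …, 2a_{2m})` then `B(a)` is the braid index of the corresponding
two-bridge knot `K([2a_1, …, 2a_{2m}])`. -/
def braidB (L : List ℤ) : ℤ :=
  (L.map (fun x => |x|)).sum - (signChanges L : ℤ) + 1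

/-- The Ohtsuki–Riley–Sakuma-type concatenated sequence
`(ε₁ a, c₁, ε₂ a⁻¹, c₂, ε₃ a, c₃, …, ε₂ᵣ a⁻¹, c₂ᵣ, ε₂ᵣ₊₁ a)`,
indexed from `0`: block `j` (for `0 ≤ j ≤ 2r`) is `ε (j) • a` if `j` is even and
`ε (j) • a.reverse` if `j` is odd, and the single entry `c j` is inserted after
block `j` for `j < 2r`. -/
def tildeSeq (r : ℕ) (a : List ℤ) (ε : ℕ → ℤ) (c : ℕ → ℤ) : List ℤ :=
  ((List.range (2 * r)).flatMap (fun j =>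
    ((if j % 2 = 0 then a else a.reverse).map (fun x => ε j * x)) ++ [c j]))
    ++ (a.map (fun x => ε (2 * r) * x))

lemma sc_nil : signChanges ([] : List ℤ) = 0 := by simp [signChanges]

lemma sc_single (x : ℤ) : signChanges [x] = 0 := by simp [signChanges]

lemma sc_cons (x : ℤ) (L : List ℤ) :
    signChanges (x :: L) = (if x * L.headD 0 < 0 then 1 else 0) + signChanges L := by
  match L with
  | [] => simp [signChanges]
  | y :: L =>
    unfold signChanges
    simp only [List.length_cons, Nat.add_sub_cancel, List.headD_cons]
    rw [Finset.card_filter, Finset.card_filter, Finset.sum_range_succ']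
    simp only [List.getD_cons_succ, List.getD_cons_zero]
    rw [add_comm]
    rfl

lemma sc_snoc (L : List ℤ) (x : ℤ) :
    signChanges (L ++ [x]) = signChanges L + (if L.getLastD 0 * x < 0 then 1 else 0) := by
  induction L with
  | nil => simp [sc_nil, sc_single]
  | cons y L ih =>
    rw [List.cons_append, sc_cons, ih, sc_cons (x := y) (L := L)]
    cases L with
    | nil => simp [sc_nil, sc_single]
    | cons z L' =>
      rw [List.cons_append, List.headD_cons, List.headD_cons]
      simp only [List.getLastD_cons, List.headD_cons, List.cons_append]
      omega

lemma sc_reverse (L : List ℤ) : signChanges L.reverse = signChanges L := by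
  induction L with
  | nil => rfl
  | cons x L ih =>
    rw [List.reverse_cons, sc_snoc, ih, sc_cons]
    have h : L.reverse.getLastD 0 = L.headD 0 := by
      cases L with
      | nil => rfl
      | cons y L' => simp [List.getLastD_concat]
    rw [h, mul_comm]
    omega

lemma sc_map_sign (e : ℤ) (he : e * e = 1) (L : List ℤ) :
    signChanges (L.map (fun x => e * x)) = signChanges L := by
  induction L with
  | nil => rfl
  | cons x L ih =>
    rw [List.map_cons, sc_cons, sc_cons, ih]
    cases L with
    | nil => simp
    | cons y L' =>
      simp only [List.map_cons, List.headD_cons]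
      have : e * x * (e * y) = x * y := by
        rw [mul_mul_mul_comm, he, one_mul]
      rw [this]
      congr

lemma sc_cons_le (x : ℤ) (L : List ℤ) : signChanges (x :: L) ≤ signChanges L + 1 := by
  rw [sc_cons]; split <;> omega

lemma sc_append_le (L1 L2 : List ℤ) :
    signChanges (L1 ++ L2) ≤ signChanges L1 + signChanges L2 + 1 := by
  induction L1 with
  | nil => simp [sc_nil]
  | cons x L1 ih =>
    rw [List.cons_append, sc_cons, sc_cons (x := x) (L := L1)]
    cases L1 with
    | nil =>
      simp only [List.nil_append, sc_nil]
      split <;> split <;> omega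
    | cons z L1' =>
      rw [List.cons_append, List.headD_cons, List.headD_cons]
      simp only [List.cons_append, List.headD_cons] at *
      omega

lemma sc_le_len (L : List ℤ) : signChanges L ≤ L.length - 1 := by
  calc signChanges L ≤ (Finset.range (L.length - 1)).card := Finset.card_filter_le _ _
  _ = L.length - 1 := Finset.card_range _

lemma sc_flatMap_le (F : ℕ → List ℤ) (n : ℕ) :
    ∀ T : List ℤ, signChanges ((List.range n).flatMap F ++ T)
      ≤ (∑ j ∈ Finset.range n, (signChanges (F j) + 1)) + signChanges T := by
  induction n with
  | zero => intro T; simp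
  | succ n ih =>
    intro T
    rw [List.range_succ, List.flatMap_append, List.flatMap_cons, List.flatMap_nil,
      List.append_nil, List.append_assoc, Finset.sum_range_succ]
    calc signChanges ((List.range n).flatMap F ++ (F n ++ T))
        ≤ (∑ j ∈ Finset.range n, (signChanges (F j) + 1)) + signChanges (F n ++ T) := ih _
      _ ≤ (∑ j ∈ Finset.range n, (signChanges (F j) + 1)) +
            (signChanges (F n) + signChanges T + 1) := by
          have := sc_append_le (F n) T; omega
      _ = _ := by ring

lemma sum_abs_flatMap (F : ℕ → List ℤ) (n : ℕ) (T : List ℤ) :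
    (((List.range n).flatMap F ++ T).map (fun x => |x|)).sum
      = (∑ j ∈ Finset.range n, ((F j).map (fun x => |x|)).sum)
        + (T.map (fun x => |x|)).sum := by
  induction n with
  | zero => simp
  | succ n ih =>
    rw [List.range_succ, List.flatMap_append, List.flatMap_cons, List.flatMap_nil,
      List.append_nil, Finset.sum_range_succ]
    simp only [List.map_append, List.sum_append] at *
    omega

lemma len_le_sum_abs (L : List ℤ) (h : ∀ x ∈ L, x ≠ 0) :
    (L.length : ℤ) ≤ (L.map (fun x => |x|)).sum := by
  induction L with
  | nil => simp
  | cons x L ih =>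
    simp only [List.map_cons, List.sum_cons, List.length_cons]
    have h1 : (1 : ℤ) ≤ |x| := by
      have hx := h x (List.mem_cons_self (a := x) (l := L))
      rcases hx.lt_or_gt with h' | h'
      · rw [abs_of_neg h']; omega
      · rw [abs_of_pos h']; omega
    have := ih (fun y hy => h y (List.mem_cons_of_mem x hy))
    push_cast
    omega

lemma sum_abs_map_sign (e : ℤ) (he : e = 1 ∨ e = -1) (L : List ℤ) :
    ((L.map (fun x => e * x)).map (fun x => |x|)).sum = (L.map (fun x => |x|)).sum := by
  rcases he with h | h <;> subst h <;>
    simp [List.map_map, Function.comp_def, abs_mul]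

lemma sum_abs_reverse (L : List ℤ) :
    (L.reverse.map (fun x => |x|)).sum = (L.map (fun x => |x|)).sum := by
  rw [List.map_reverse, List.sum_reverse]

/-- Theorem 3.1 (combinatorial core): if `ã` is the ORS concatenated sequence built
from `a`, then `B(ã) ≥ 3 B(a) - 4`. -/
theorem braidB_tildeSeq_ge (m r : ℕ) (hm : 1 ≤ m) (hr : 1 ≤ r)
    (a : List ℤ) (ha_len : a.length = 2 * m) (ha : ∀ x ∈ a, x ≠ 0)
    (ε : ℕ → ℤ) (hε : ∀ j ≤ 2 * r, ε j = 1 ∨ ε j = -1) (hε0 : ε 0 = 1)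
    (c : ℕ → ℤ) (hc : ∀ j < 2 * r, c j ≠ 0) :
    braidB (tildeSeq r a ε c) ≥ 3 * braidB a - 4 := by
  classical
  set t := signChanges a with ht_def
  set S := (a.map (fun x => |x|)).sum with hS_def
  set F : ℕ → List ℤ := fun j =>
    ((if j % 2 = 0 then a else a.reverse).map (fun x => ε j * x)) ++ [c j] with hF
  set T : List ℤ := a.map (fun x => ε (2 * r) * x) with hT
  have htilde : tildeSeq r a ε c = (List.range (2 * r)).flatMap F ++ T := rfl
  -- sign-change count of each block
  have hFsc : ∀ j < 2 * r, signChanges (F j) ≤ t + 1 := by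
    intro j hj
    have he : ε j * ε j = 1 := by
      rcases hε j (le_of_lt hj) with h | h <;> rw [h] <;> ring
    have h1 : signChanges ((if j % 2 = 0 then a else a.reverse).map (fun x => ε j * x)) = t := by
      rw [sc_map_sign _ he]
      split
      · rfl
      · exact sc_reverse a
    calc signChanges (F j)
        ≤ signChanges ((if j % 2 = 0 then a else a.reverse).map (fun x => ε j * x))
            + signChanges [c j] + 1 := sc_append_le _ _
      _ = t + 1 := by rw [h1, sc_single]
  have hTsc : signChanges T = t := by
    have he : ε (2 * r) * ε (2 * r) = 1 := by
      rcases hε (2 * r) le_rfl with h | h <;> rw [h] <;> ring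
    exact sc_map_sign _ he a
  have hsc : signChanges (tildeSeq r a ε c) ≤ 2 * r * (t + 2) + t := by
    rw [htilde]
    calc signChanges ((List.range (2 * r)).flatMap F ++ T)
        ≤ (∑ j ∈ Finset.range (2 * r), (signChanges (F j) + 1)) + signChanges T :=
          sc_flatMap_le F (2 * r) T
      _ ≤ (∑ _j ∈ Finset.range (2 * r), (t + 2)) + t := by
          refine Nat.add_le_add ?_ (le_of_eq hTsc)
          refine Finset.sum_le_sum fun j hj => ?_
          have := hFsc j (Finset.mem_range.mp hj); omega
      _ = 2 * r * (t + 2) + t := by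
          rw [Finset.sum_const, Finset.card_range, smul_eq_mul]
  -- sums of absolute values
  have hFsum : ∀ j < 2 * r, S + 1 ≤ ((F j).map (fun x => |x|)).sum := by
    intro j hj
    have h1 : (((if j % 2 = 0 then a else a.reverse).map (fun x => ε j * x)).map
        (fun x => |x|)).sum = S := by
      rw [sum_abs_map_sign _ (hε j (le_of_lt hj))]
      split
      · rfl
      · exact sum_abs_reverse a
    have h2 : (1 : ℤ) ≤ |c j| := by
      have hcj := hc j hj
      rcases hcj.lt_or_gt with h' | h'
      · rw [abs_of_neg h']; omega
      · rw [abs_of_pos h']; omega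
    show S + 1 ≤ ((((if j % 2 = 0 then a else a.reverse).map (fun x => ε j * x)) ++ [c j]).map
        (fun x => |x|)).sum
    rw [List.map_append, List.sum_append, h1]
    simp only [List.map_cons, List.map_nil, List.sum_cons, List.sum_nil, add_zero]
    omega
  have hTsum : (T.map (fun x => |x|)).sum = S := sum_abs_map_sign _ (hε (2 * r) le_rfl) a
  have hsum : (2 * r : ℤ) * (S + 1) + S ≤ ((tildeSeq r a ε c).map (fun x => |x|)).sum := by
    rw [htilde, sum_abs_flatMap, hTsum]
    have : (∑ _j ∈ Finset.range (2 * r), (S + 1))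
        ≤ ∑ j ∈ Finset.range (2 * r), ((F j).map (fun x => |x|)).sum :=
      Finset.sum_le_sum fun j hj => hFsum j (Finset.mem_range.mp hj)
    rw [Finset.sum_const, Finset.card_range, nsmul_eq_mul] at this
    push_cast at this ⊢
    linarith
  -- basic bounds on S and t
  have hSlen : (2 * m : ℤ) ≤ S := by
    have := len_le_sum_abs a ha
    rw [ha_len] at this
    exact_mod_cast this
  have htlen : (t : ℤ) ≤ 2 * m - 1 := by
    have h1 := sc_le_len a
    rw [ha_len] at h1
    have : t ≤ 2 * m - 1 := h1
    omega
  -- put it together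
  have hscZ : (signChanges (tildeSeq r a ε c) : ℤ) ≤ 2 * r * (t + 2) + t := by
    exact_mod_cast hsc
  have hrZ : (1 : ℤ) ≤ (r : ℤ) := by exact_mod_cast hr
  have hmZ : (1 : ℤ) ≤ (m : ℤ) := by exact_mod_cast hm
  unfold braidB
  rw [ge_iff_le, ← ht_def, ← hS_def]
  have hDt : (1 : ℤ) ≤ S - t := by omega
  nlinarith [mul_nonneg (sub_nonneg.mpr hrZ) (sub_nonneg.mpr hDt), hsum, hscZ]
end

section
/- Let m, r ≥ 1, let a = (a_1, …, a_{2m}) be a sequence of nonzero integers, let ε_1, …, ε_{2r+1} ∈ {1, −1}, and let c_1, …, c_{2r} be arbitrary integers. Let ã be the concatenated sequence (ε_1 a, c_1, ε_2 a^{rev}, c_2, ε_3 a, c_3, …, ε_{2r} a^{rev}, c_{2r}, ε_{2r+1} a), where ε a denotes the sequence (ε a_1, …, ε a_{2m}) and a^{rev} = (a_{2m}, …, a_1). Then the number of sign changes satisfies t(ã) ≤ (2r+1)·t(a) + 2·#{j : c_j ≠ 0}. -/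
/-- Recursive version of `signChanges`. -/
def t' : List ℤ → ℕ
  | [] => 0
  | [_] => 0
  | x :: y :: l => (if x * y < 0 then 1 else 0) + t' (y :: l)

lemma signChanges_eq (L : List ℤ) : signChanges L = t' L := by
  induction L with
  | nil => simp [signChanges, t']
  | cons a L ih =>
    cases L with
    | nil => simp [signChanges, t']
    | cons b l =>
      have h1 : signChanges (a :: b :: l) =
          (if a * b < 0 then 1 else 0) + signChanges (b :: l) := by
        simp only [signChanges, List.length_cons, Nat.add_sub_cancel]
        rw [Finset.card_filter, Finset.card_filter, Finset.sum_range_succ']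
        simp only [List.getD_cons_succ, List.getD_cons_zero]
        omega
      rw [h1, ih]
      rfl

lemma t'_append (L M : List ℤ) (x : ℤ) :
    t' (L ++ x :: M) = t' (L ++ [x]) + t' (x :: M) := by
  induction L with
  | nil => simp [t']
  | cons a L ih =>
    cases L with
    | nil => simp [t']
    | cons b l =>
      have h1 : (a :: b :: l) ++ x :: M = a :: b :: (l ++ x :: M) := rfl
      have h2 : (a :: b :: l) ++ [x] = a :: b :: (l ++ [x]) := rfl
      rw [h1, h2]
      show (if a * b < 0 then 1 else 0) + t' (b :: (l ++ x :: M)) =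
        ((if a * b < 0 then 1 else 0) + t' (b :: (l ++ [x]))) + t' (x :: M)
      have := ih
      simp only [List.cons_append] at this
      omega

lemma t'_map (e : ℤ) (he : e = 1 ∨ e = -1) (L : List ℤ) :
    t' (L.map (fun x => e * x)) = t' L := by
  induction L with
  | nil => rfl
  | cons a L ih =>
    cases L with
    | nil => rfl
    | cons b l =>
      have hpair : (e * a) * (e * b) = a * b := by
        rcases he with rfl | rfl <;> ring
      show (if (e * a) * (e * b) < 0 then 1 else 0) + t' ((b :: l).map (fun x => e * x)) =
        (if a * b < 0 then 1 else 0) + t' (b :: l)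
      rw [hpair, ih]

lemma t'_concat (L : List ℤ) (x : ℤ) :
    t' (L ++ [x]) = t' L + (if L.getLastD 0 * x < 0 then 1 else 0) := by
  induction L with
  | nil => simp [t']
  | cons a L ih =>
    cases L with
    | nil => simp [t']
    | cons b l =>
      show (if a * b < 0 then 1 else 0) + t' ((b :: l) ++ [x]) =
        ((if a * b < 0 then 1 else 0) + t' (b :: l)) +
          (if (a :: b :: l).getLastD 0 * x < 0 then 1 else 0)
      rw [ih]
      have : (a :: b :: l).getLastD 0 = (b :: l).getLastD 0 := by
        simp [List.getLastD_cons]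
      rw [this]
      omega

lemma t'_reverse (L : List ℤ) : t' L.reverse = t' L := by
  induction L with
  | nil => rfl
  | cons a L ih =>
    cases L with
    | nil => rfl
    | cons b l =>
      rw [List.reverse_cons, t'_concat, ih]
      have hlast : ((b :: l).reverse).getLastD 0 = b := by
        rw [List.getLastD_eq_getLast?, List.getLast?_reverse]
        rfl
      rw [hlast]
      show t' (b :: l) + _ = (if a * b < 0 then 1 else 0) + t' (b :: l)
      rw [mul_comm]
      omega

lemma t'_cons_le (x : ℤ) (M : List ℤ) :
    t' (x :: M) ≤ t' M + (if x = 0 then 0 else 1) := by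
  cases M with
  | nil => simp [t']
  | cons y l =>
    show (if x * y < 0 then 1 else 0) + t' (y :: l) ≤ _
    rcases eq_or_ne x 0 with rfl | hx
    · simp
    · simp only [hx, if_false]
      split_ifs <;> omega

lemma t'_concat_le (L : List ℤ) (x : ℤ) :
    t' (L ++ [x]) ≤ t' L + (if x = 0 then 0 else 1) := by
  rw [t'_concat]
  rcases eq_or_ne x 0 with rfl | hx
  · simp
  · simp only [hx, if_false]
    split_ifs <;> omega

lemma t'_main (a : List ℤ) (ε c : ℕ → ℤ) :
    ∀ n, (∀ j ≤ n, ε j = 1 ∨ ε j = -1) →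
    t' (((List.range n).flatMap (fun j =>
        ((if j % 2 = 0 then a else a.reverse).map (fun x => ε j * x)) ++ [c j]))
      ++ ((if n % 2 = 0 then a else a.reverse).map (fun x => ε n * x)))
    ≤ (n + 1) * t' a + 2 * ((Finset.range n).filter (fun j => c j ≠ 0)).card := by
  intro n
  induction n with
  | zero =>
    intro h
    rw [if_pos (show (0:ℕ) % 2 = 0 from rfl)]
    simp only [List.range_zero, List.flatMap_nil, List.nil_append,
      Finset.range_zero, Finset.filter_empty, Finset.card_empty]
    rw [t'_map _ (h 0 le_rfl)]
    omega
  | succ n ih =>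
    intro h
    have hε' : ∀ j ≤ n, ε j = 1 ∨ ε j = -1 := fun j hj => h j (hj.trans (Nat.le_succ n))
    set g : ℕ → List ℤ := fun j =>
      (if j % 2 = 0 then a else a.reverse).map (fun x => ε j * x) with hg
    have hsplit : ((List.range (n + 1)).flatMap (fun j => g j ++ [c j])) ++ g (n + 1)
        = (((List.range n).flatMap (fun j => g j ++ [c j])) ++ g n) ++ (c n :: g (n + 1)) := by
      rw [List.range_succ, List.flatMap_append]
      simp [List.append_assoc]
    rw [hsplit, t'_append]
    have hga : t' (g (n + 1)) = t' a := by
      have hε1 := h (n + 1) le_rfl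
      simp only [hg]
      split_ifs <;> rw [t'_map _ hε1]
      · rw [t'_reverse]
    have hIH := ih hε'
    have hpre : t' (((List.range n).flatMap (fun j => g j ++ [c j])) ++ g n)
        ≤ (n + 1) * t' a + 2 * ((Finset.range n).filter (fun j => c j ≠ 0)).card := hIH
    have h1 := t'_concat_le (((List.range n).flatMap (fun j => g j ++ [c j])) ++ g n) (c n)
    have h2 := t'_cons_le (c n) (g (n + 1))
    have hcard : ((Finset.range (n + 1)).filter (fun j => c j ≠ 0)).card
        = ((Finset.range n).filter (fun j => c j ≠ 0)).card + (if c n = 0 then 0 else 1) := by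
      rw [Finset.range_add_one, Finset.filter_insert]
      by_cases hc : c n = 0
      · rw [if_neg (not_not_intro hc), if_pos hc, Nat.add_zero]
      · rw [if_pos hc, if_neg hc, Finset.card_insert_of_notMem (by simp)]
    have hT : (n + 1 + 1) * t' a = (n + 1) * t' a + t' a := by ring
    rw [hcard, hT]
    rw [hga] at h2
    rcases eq_or_ne (c n) 0 with h0 | h0 <;> simp only [h0, if_pos, if_neg, ite_true, ite_false,
      ne_eq, not_true_eq_false, not_false_eq_true] at h1 h2 ⊢ <;> linarith

/-- The number of sign changes of the ORS concatenated sequence `ã` is at most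
`(2r+1) t(a) + 2 #{j : c_j ≠ 0}`. -/
theorem signChanges_tildeSeq_le (m r : ℕ) (hm : 1 ≤ m) (hr : 1 ≤ r)
    (a : List ℤ) (ha_len : a.length = 2 * m) (ha : ∀ x ∈ a, x ≠ 0)
    (ε : ℕ → ℤ) (hε : ∀ j ≤ 2 * r, ε j = 1 ∨ ε j = -1) (c : ℕ → ℤ) :
    signChanges (tildeSeq r a ε c) ≤
      (2 * r + 1) * signChanges a +
        2 * ((Finset.range (2 * r)).filter (fun j => c j ≠ 0)).card := by
  rw [signChanges_eq, signChanges_eq]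
  have hmod : (2 * r) % 2 = 0 := Nat.mul_mod_right 2 r
  have := t'_main a ε c (2 * r) hε
  rw [hmod] at this
  simpa [tildeSeq] using this
end

section
/- Let m, r ≥ 1, let a = (a_1, …, a_{2m}) be the alternating sequence with a_i = (−1)^{i−1} (so a = (1, −1, 1, −1, …, 1, −1)), let ε_1, …, ε_{2r+1} ∈ {1, −1} with ε_1 = 1, and let c_1, …, c_{2r} be nonzero integers. Let ã be the concatenated sequence (ε_1 a, c_1, ε_2 a^{rev}, c_2, ε_3 a, c_3, …, ε_{2r} a^{rev}, c_{2r}, ε_{2r+1} a), where ε a denotes the sequence (ε a_1, …, ε a_{2m}) and a^{rev} = (a_{2m}, …, a_1). If B(ã) = 2, then ε_j = 1 for all 1 ≤ j ≤ 2r+1 and c_j = (−1)^{j−1} for all 1 ≤ j ≤ 2r; consequently ã is the alternating sequence (1, −1, 1, −1, …, 1, −1) of length (2r+1)·2m + 2r. (This shows that a two-bridge knot of braid index 2 admitting an epimorphism onto the torus knot T(2m+1, 2) must be the torus knot T((2r+1)(2m+1), 2).) -/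
/-- The alternating sequence `(1, -1, 1, -1, …)` of length `N`. -/
def altSeq (N : ℕ) : List ℤ :=
  (List.range N).map (fun i => (-1 : ℤ) ^ i)

lemma altSeq_length (N : ℕ) : (altSeq N).length = N := by simp [altSeq]

lemma altSeq_getD {N i : ℕ} (h : i < N) : (altSeq N).getD i 0 = (-1 : ℤ) ^ i := by
  rw [List.getD_eq_getElem _ _ (by simpa [altSeq] using h)]
  simp [altSeq]

lemma flatMap_range_length (g : ℕ → List ℤ) (k n : ℕ) (hlen : ∀ j, (g j).length = k) :
    ((List.range n).flatMap g).length = n * k := by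
  induction n with
  | zero => simp
  | succ n ih =>
    rw [List.range_succ, List.flatMap_append]
    simp [ih, hlen, Nat.succ_mul]

lemma flatMap_range_getD (g : ℕ → List ℤ) (k : ℕ) (hlen : ∀ j, (g j).length = k)
    {n j i : ℕ} (hj : j < n) (hi : i < k) :
    ((List.range n).flatMap g).getD (j * k + i) 0 = (g j).getD i 0 := by
  induction n with
  | zero => omega
  | succ n ih =>
    rw [List.range_succ, List.flatMap_append]
    rcases Nat.lt_or_ge j n with h | h
    · rw [List.getD_append]
      · exact ih h
      · rw [flatMap_range_length g k _ hlen]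
        calc j * k + i < (j + 1) * k := by rw [Nat.succ_mul]; omega
          _ ≤ n * k := Nat.mul_le_mul_right k h
    · have hjn : j = n := by omega
      subst hjn
      have hL : ((List.range j).flatMap g).length = j * k := flatMap_range_length g k j hlen
      rw [List.getD_append_right _ _ _ _ (by rw [hL]; omega), hL]
      simp [Nat.add_sub_cancel_left]

lemma sum_ge_length (L : List ℤ) (h : ∀ x ∈ L, 1 ≤ x) : (L.length : ℤ) ≤ L.sum := by
  induction L with
  | nil => simp
  | cons a l ih =>
    have h1 := h a (by simp)
    have h2 := ih (fun x hx => h x (by simp [hx]))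
    simp only [List.sum_cons, List.length_cons]
    push_cast
    linarith

lemma all_eq_one (L : List ℤ) (h : ∀ x ∈ L, 1 ≤ x) (hs : L.sum = L.length) :
    ∀ x ∈ L, x = 1 := by
  induction L with
  | nil => simp
  | cons a l ih =>
    have h1 := h a (by simp)
    have h2 := sum_ge_length l (fun x hx => h x (by simp [hx]))
    simp only [List.sum_cons, List.length_cons] at hs
    push_cast at hs
    have ha : a = 1 := by linarith
    have hl : l.sum = l.length := by linarith
    intro x hx
    rcases List.mem_cons.mp hx with rfl | hx
    · exact ha
    · exact ih (fun y hy => h y (by simp [hy])) hl x hx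

/-- Block `j` together with the inserted entry `c j`. -/
def blockG (m : ℕ) (ε c : ℕ → ℤ) (j : ℕ) : List ℤ :=
  ((if j % 2 = 0 then altSeq (2 * m) else (altSeq (2 * m)).reverse).map (fun x => ε j * x))
    ++ [c j]

lemma tildeSeq_eq (m r : ℕ) (ε c : ℕ → ℤ) :
    tildeSeq r (altSeq (2 * m)) ε c =
      (List.range (2 * r)).flatMap (blockG m ε c)
        ++ (altSeq (2 * m)).map (fun x => ε (2 * r) * x) := rfl

lemma blockG_length (m : ℕ) (ε c : ℕ → ℤ) (j : ℕ) :
    (blockG m ε c j).length = 2 * m + 1 := by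
  unfold blockG; split <;> simp [altSeq]

lemma blockG_getD_zero (m : ℕ) (hm : 1 ≤ m) (ε c : ℕ → ℤ) (j : ℕ) :
    (blockG m ε c j).getD 0 0 = ε j * (if j % 2 = 0 then 1 else -1) := by
  unfold blockG
  by_cases hp : j % 2 = 0
  · simp only [hp, if_true]
    rw [List.getD_append _ _ _ _ (by simp [altSeq]; omega)]
    rw [List.getD_eq_getElem _ _ (by simp [altSeq]; omega)]
    simp [altSeq]
  · simp only [hp, if_false]
    rw [List.getD_append _ _ _ _ (by simp [altSeq]; omega)]
    rw [List.getD_eq_getElem _ _ (by simp [altSeq]; omega)]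
    rw [List.getElem_map, List.getElem_reverse]
    have h1 : 2 * m - 1 - 0 < 2 * m := by omega
    have : (altSeq (2 * m))[(altSeq (2*m)).length - 1 - 0]'(by simp [altSeq]; omega)
        = (-1 : ℤ) ^ (2 * m - 1) := by
      rw [← List.getD_eq_getElem _ 0 (by simp [altSeq]; omega)]
      simp only [altSeq_length]
      rw [altSeq_getD (by omega)]
      norm_num
    rw [this]
    have hodd : Odd (2 * m - 1) := by
      rcases Nat.exists_eq_add_of_le hm with ⟨k, hk⟩
      exact ⟨m - 1, by omega⟩
    rw [hodd.neg_one_pow]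

lemma blockG_getD_last (m : ℕ) (ε c : ℕ → ℤ) (j : ℕ) :
    (blockG m ε c j).getD (2 * m) 0 = c j := by
  unfold blockG
  rw [List.getD_append_right _ _ _ _ (by split <;> simp [altSeq])]
  split <;> simp [altSeq]

lemma tildeSeq_length' (m r : ℕ) (ε c : ℕ → ℤ) :
    (tildeSeq r (altSeq (2 * m)) ε c).length = 2 * r * (2 * m + 1) + 2 * m := by
  rw [tildeSeq_eq, List.length_append,
    flatMap_range_length _ _ _ (blockG_length m ε c)]
  simp [altSeq]

lemma tildeSeq_getD_block (m r : ℕ) (ε c : ℕ → ℤ) {j i : ℕ} (hj : j < 2 * r)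
    (hi : i < 2 * m + 1) :
    (tildeSeq r (altSeq (2 * m)) ε c).getD (j * (2 * m + 1) + i) 0
      = (blockG m ε c j).getD i 0 := by
  rw [tildeSeq_eq]
  rw [List.getD_append _ _ _ _ (by
    rw [flatMap_range_length _ _ _ (blockG_length m ε c)]
    calc j * (2 * m + 1) + i < (j + 1) * (2 * m + 1) := by
          have := Nat.add_mul j 1 (2 * m + 1); omega
      _ ≤ 2 * r * (2 * m + 1) := Nat.mul_le_mul_right _ hj)]
  exact flatMap_range_getD _ _ (blockG_length m ε c) hj hi

lemma tildeSeq_getD_tail (m r : ℕ) (ε c : ℕ → ℤ) {i : ℕ} (hi : i < 2 * m) :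
    (tildeSeq r (altSeq (2 * m)) ε c).getD (2 * r * (2 * m + 1) + i) 0
      = ε (2 * r) * (-1) ^ i := by
  have hL0 := flatMap_range_length (blockG m ε c) (2 * m + 1) (2 * r) (blockG_length m ε c)
  rw [tildeSeq_eq, List.getD_append_right _ _ _ _ (by rw [hL0]; omega), hL0,
    Nat.add_sub_cancel_left]
  rw [List.getD_eq_getElem _ _ (by simp [altSeq]; omega)]
  rw [List.getElem_map]
  rw [← List.getD_eq_getElem _ 0 (by simp [altSeq]; omega), altSeq_getD hi]

lemma tildeSeq_ne_zero (m r : ℕ) (ε c : ℕ → ℤ)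
    (hε : ∀ j ≤ 2 * r, ε j = 1 ∨ ε j = -1) (hc : ∀ j < 2 * r, c j ≠ 0) :
    ∀ x ∈ tildeSeq r (altSeq (2 * m)) ε c, x ≠ 0 := by
  have hεnz : ∀ j ≤ 2 * r, ε j ≠ 0 := by
    intro j hj; rcases hε j hj with h | h <;> simp [h]
  have haltnz : ∀ y ∈ altSeq (2 * m), y ≠ 0 := by
    intro y hy
    obtain ⟨i, -, rfl⟩ := List.mem_map.mp hy
    exact pow_ne_zero i (by norm_num)
  intro x hx
  rw [tildeSeq_eq, List.mem_append] at hx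
  rcases hx with hx | hx
  · obtain ⟨j, hj, hx⟩ := List.mem_flatMap.mp hx
    have hjr : j < 2 * r := List.mem_range.mp hj
    unfold blockG at hx
    rcases List.mem_append.mp hx with hx | hx
    · obtain ⟨y, hy, rfl⟩ := List.mem_map.mp hx
      have hy0 : y ≠ 0 := by
        split at hy
        · exact haltnz y hy
        · exact haltnz y (List.mem_reverse.mp hy)
      exact mul_ne_zero (hεnz j (by omega)) hy0
    · simp only [List.mem_singleton] at hx
      subst hx
      exact hc j hjr
  · obtain ⟨y, hy, rfl⟩ := List.mem_map.mp hx
    exact mul_ne_zero (hεnz (2 * r) le_rfl) (haltnz y hy)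

/-- If a two-bridge knot of braid index `2` admits an epimorphism onto the torus knot
`T(2m+1, 2)` (whose continued fraction is the alternating sequence `a = (1, -1, …, 1, -1)`
of length `2m`), then in the ORS form all `ε_j = 1` and `c_j = (-1)^(j-1)`
(in `0`-based indexing, `ε j = 1` for `j ≤ 2r` and `c j = (-1)^j` for `j < 2r`);
consequently `ã` is the alternating sequence of length `(2r+1)·2m + 2r`, i.e. the
knot is the torus knot `T((2r+1)(2m+1), 2)`. -/
theorem braidB_tildeSeq_eq_two (m r : ℕ) (hm : 1 ≤ m) (hr : 1 ≤ r)
    (ε : ℕ → ℤ) (hε : ∀ j ≤ 2 * r, ε j = 1 ∨ ε j = -1) (hε0 : ε 0 = 1)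
    (c : ℕ → ℤ) (hc : ∀ j < 2 * r, c j ≠ 0)
    (hB : braidB (tildeSeq r (altSeq (2 * m)) ε c) = 2) :
    (∀ j ≤ 2 * r, ε j = 1) ∧ (∀ j < 2 * r, c j = (-1) ^ j) ∧
      tildeSeq r (altSeq (2 * m)) ε c = altSeq ((2 * r + 1) * (2 * m) + 2 * r) := by
  have hnz := tildeSeq_ne_zero m r ε c hε hc
  generalize hLdef : tildeSeq r (altSeq (2 * m)) ε c = L at hB hnz ⊢
  have hLlen : L.length = 2 * r * (2 * m + 1) + 2 * m := by
    rw [← hLdef]; exact tildeSeq_length' m r ε c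
  have hgb : ∀ {j i : ℕ}, j < 2 * r → i < 2 * m + 1 →
      L.getD (j * (2 * m + 1) + i) 0 = (blockG m ε c j).getD i 0 := by
    intro j i hj hi; rw [← hLdef]; exact tildeSeq_getD_block m r ε c hj hi
  have hgt : ∀ {i : ℕ}, i < 2 * m →
      L.getD (2 * r * (2 * m + 1) + i) 0 = ε (2 * r) * (-1) ^ i := by
    intro i hi; rw [← hLdef]; exact tildeSeq_getD_tail m r ε c hi
  set N := 2 * r * (2 * m + 1) + 2 * m with hNdef
  clear_value N
  have hN1 : 2 * m + 1 ≤ N := by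
    have h2 : 0 < 2 * r * (2 * m + 1) := Nat.mul_pos (by omega) (by omega)
    omega
  -- sum bound
  have habs1 : ∀ x ∈ L.map (fun x => |x|), 1 ≤ x := by
    intro x hx
    obtain ⟨y, hy, rfl⟩ := List.mem_map.mp hx
    exact Int.one_le_abs (hnz y hy)
  have hS : (N : ℤ) ≤ (L.map (fun x => |x|)).sum := by
    have h := sum_ge_length _ habs1
    rwa [List.length_map, hLlen] at h
  have ht : signChanges L ≤ N - 1 := by
    unfold signChanges
    calc _ ≤ (Finset.range (L.length - 1)).card := Finset.card_filter_le _ _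
      _ = N - 1 := by rw [Finset.card_range, hLlen]
  unfold braidB at hB
  have hSsum : (L.map (fun x => |x|)).sum = (N : ℤ) := by omega
  have htN : signChanges L = N - 1 := by omega
  have hfull : (Finset.range (L.length - 1)).filter
      (fun i => L.getD i 0 * L.getD (i + 1) 0 < 0) = Finset.range (L.length - 1) := by
    apply Finset.eq_of_subset_of_card_le (Finset.filter_subset _ _)
    unfold signChanges at htN
    rw [Finset.card_range]
    omega
  have hflip : ∀ i, i < N - 1 → L.getD i 0 * L.getD (i + 1) 0 < 0 := by
    intro i hi
    have hmem : i ∈ Finset.range (L.length - 1) := by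
      rw [hLlen]; exact Finset.mem_range.mpr hi
    rw [← hfull] at hmem
    exact (Finset.mem_filter.mp hmem).2
  have hone : ∀ i, i < N → L.getD i 0 = 1 ∨ L.getD i 0 = -1 := by
    intro i hi
    have hm1 : |L.getD i 0| = 1 := by
      apply all_eq_one _ habs1 ?_ _ (List.mem_map.mpr ⟨L.getD i 0, ?_, rfl⟩)
      · rw [hSsum, List.length_map, hLlen]
      · rw [List.getD_eq_getElem _ _ (by omega)]
        exact List.getElem_mem _
    exact (abs_eq (by norm_num : (0:ℤ) ≤ 1)).mp hm1
  have hF : ∀ i, i < N → L.getD i 0 = (-1) ^ i := by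
    intro i
    induction i with
    | zero =>
      intro _
      have h0 := hgb (show 0 < 2 * r by omega) (show 0 < 2 * m + 1 by omega)
      rw [Nat.zero_mul, Nat.zero_add] at h0
      rw [h0, blockG_getD_zero m hm ε c 0]
      simp [hε0]
    | succ i ih =>
      intro hi
      have h1 := ih (by omega)
      have h2 := hflip i (by omega)
      have h3 := hone (i + 1) hi
      rw [h1] at h2
      rcases h3 with h3 | h3 <;> rw [h3] <;> rw [h3] at h2 <;>
          rcases Nat.even_or_odd i with he | he
      · exfalso; rw [he.neg_one_pow] at h2; norm_num at h2
      · rw [pow_succ, he.neg_one_pow]; norm_num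
      · rw [pow_succ, he.neg_one_pow]; norm_num
      · exfalso; rw [he.neg_one_pow] at h2; norm_num at h2
  have hε1 : ∀ j ≤ 2 * r, ε j = 1 := by
    intro j hj
    rcases Nat.lt_or_ge j (2 * r) with hjlt | hje
    · have hb : j * (2 * m + 1) + 0 < N := by
        have h1 := Nat.add_mul j 1 (2 * m + 1)
        have h2 : (j + 1) * (2 * m + 1) ≤ 2 * r * (2 * m + 1) :=
          Nat.mul_le_mul_right _ hjlt
        omega
      have heq := hF (j * (2 * m + 1) + 0) hb
      rw [hgb hjlt (show 0 < 2 * m + 1 by omega), blockG_getD_zero m hm ε c j] at heq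
      rw [Nat.add_zero] at heq
      rcases Nat.even_or_odd j with hpar | hpar
      · rw [if_pos (Nat.even_iff.mp hpar)] at heq
        have hev : Even (j * (2 * m + 1)) := hpar.mul_right _
        rw [hev.neg_one_pow] at heq
        linarith
      · rw [if_neg (by rw [Nat.odd_iff] at hpar; omega)] at heq
        have hod : Odd (j * (2 * m + 1)) := hpar.mul (odd_two_mul_add_one m)
        rw [hod.neg_one_pow] at heq
        linarith
    · have hje' : j = 2 * r := by omega
      subst hje'
      have hb : 2 * r * (2 * m + 1) + 0 < N := by omega
      have heq := hF (2 * r * (2 * m + 1) + 0) hb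
      rw [hgt (show 0 < 2 * m by omega)] at heq
      have hev : Even (2 * r * (2 * m + 1) + 0) := ⟨r * (2 * m + 1), by ring⟩
      rw [hev.neg_one_pow] at heq
      simpa using heq
  have hc1 : ∀ j < 2 * r, c j = (-1) ^ j := by
    intro j hj
    have hb : j * (2 * m + 1) + 2 * m < N := by
      have h1 := Nat.add_mul j 1 (2 * m + 1)
      have h2 : (j + 1) * (2 * m + 1) ≤ 2 * r * (2 * m + 1) :=
        Nat.mul_le_mul_right _ hj
      omega
    have heq := hF (j * (2 * m + 1) + 2 * m) hb
    rw [hgb hj (by omega), blockG_getD_last] at heq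
    rcases Nat.even_or_odd j with hpar | hpar
    · have hev : Even (j * (2 * m + 1) + 2 * m) := (hpar.mul_right _).add ⟨m, by ring⟩
      rw [hev.neg_one_pow] at heq
      rw [heq, hpar.neg_one_pow]
    · have hod : Odd (j * (2 * m + 1) + 2 * m) :=
        (hpar.mul (odd_two_mul_add_one m)).add_even ⟨m, by ring⟩
      rw [hod.neg_one_pow] at heq
      rw [heq, hpar.neg_one_pow]
  refine ⟨hε1, hc1, ?_⟩
  have hNN : (2 * r + 1) * (2 * m) + 2 * r = N := by rw [hNdef]; ring
  rw [hNN]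
  apply List.ext_getElem
  · rw [hLlen, altSeq_length]
  · intro n h1 h2
    rw [← List.getD_eq_getElem L 0 h1, ← List.getD_eq_getElem _ 0 h2]
    rw [hF n (by rwa [hLlen] at h1), altSeq_getD (by rwa [altSeq_length] at h2)]
end
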